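/- Any two Tucker decompositions of the same tensor with scaled-orthonormal loadings differ by orthogonal transformations: if S = F ×1 A1 ×2 A2 ×3 A3 = F̃ ×1 Ã1 ×2 Ã2 ×3 Ã3 are two Tucker decompositions with full column-rank cores of ranks equal to the multilinear ranks of S, and Amᵀ Am = Ãmᵀ Ãm = I_m · Id_{Rm} for all m, then there exist orthogonal matrices Hm ∈ O(Rm) with Am = Ãm Hm for all m and F = F̃ ×1 H1ᵀ ×2 H2ᵀ ×3 H3ᵀ. -/
import Mathlib


open Matrix Kronecker

noncomputable section

/-- Tucker product F ×₁ A1 ×₂ A2 ×₃ A3. -/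
def tuck {I1 I2 I3 R1 R2 R3 : ℕ} (F : Fin R1 → Fin R2 → Fin R3 → ℝ)
    (A1 : Matrix (Fin I1) (Fin R1) ℝ) (A2 : Matrix (Fin I2) (Fin R2) ℝ)
    (A3 : Matrix (Fin I3) (Fin R3) ℝ) : Fin I1 → Fin I2 → Fin I3 → ℝ :=
  fun i1 i2 i3 => ∑ r1, ∑ r2, ∑ r3, A1 i1 r1 * A2 i2 r2 * A3 i3 r3 * F r1 r2 r3

/-- Mode-1 matricization. -/
def mat1 {I1 I2 I3 : ℕ} (S : Fin I1 → Fin I2 → Fin I3 → ℝ) :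
    Matrix (Fin I1) (Fin I2 × Fin I3) ℝ :=
  Matrix.of fun i p => S i p.1 p.2

/-- Mode-2 matricization. -/
def mat2 {I1 I2 I3 : ℕ} (S : Fin I1 → Fin I2 → Fin I3 → ℝ) :
    Matrix (Fin I2) (Fin I1 × Fin I3) ℝ :=
  Matrix.of fun i p => S p.1 i p.2

/-- Mode-3 matricization. -/
def mat3 {I1 I2 I3 : ℕ} (S : Fin I1 → Fin I2 → Fin I3 → ℝ) :
    Matrix (Fin I3) (Fin I1 × Fin I2) ℝ :=
  Matrix.of fun i p => S p.1 p.2 i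

lemma sum3_rot {a b c : ℕ} (f : Fin a → Fin b → Fin c → ℝ) :
    ∑ x, ∑ y, ∑ z, f x y z = ∑ z, ∑ x, ∑ y, f x y z := by
  rw [show (∑ x, ∑ y, ∑ z, f x y z) = ∑ x, ∑ z, ∑ y, f x y z from
    Finset.sum_congr rfl fun x _ => Finset.sum_comm]
  exact Finset.sum_comm

lemma mat1_tuck {I1 I2 I3 R1 R2 R3 : ℕ} (F : Fin R1 → Fin R2 → Fin R3 → ℝ)
    (A1 : Matrix (Fin I1) (Fin R1) ℝ) (A2 : Matrix (Fin I2) (Fin R2) ℝ)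
    (A3 : Matrix (Fin I3) (Fin R3) ℝ) :
    mat1 (tuck F A1 A2 A3) = A1 * (mat1 F * (A2 ⊗ₖ A3)ᵀ) := by
  ext i p
  obtain ⟨i2, i3⟩ := p
  simp only [mat1, tuck, of_apply, Matrix.mul_apply, Fintype.sum_prod_type,
    transpose_apply, kroneckerMap_apply, Finset.mul_sum, Finset.sum_mul]
  refine Finset.sum_congr rfl fun r1 _ => Finset.sum_congr rfl fun r2 _ =>
    Finset.sum_congr rfl fun r3 _ => by ring

lemma mat2_tuck {I1 I2 I3 R1 R2 R3 : ℕ} (F : Fin R1 → Fin R2 → Fin R3 → ℝ)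
    (A1 : Matrix (Fin I1) (Fin R1) ℝ) (A2 : Matrix (Fin I2) (Fin R2) ℝ)
    (A3 : Matrix (Fin I3) (Fin R3) ℝ) :
    mat2 (tuck F A1 A2 A3) = A2 * (mat2 F * (A1 ⊗ₖ A3)ᵀ) := by
  ext i p
  obtain ⟨i1, i3⟩ := p
  simp only [mat2, tuck, of_apply, Matrix.mul_apply, Fintype.sum_prod_type,
    transpose_apply, kroneckerMap_apply, Finset.mul_sum, Finset.sum_mul]
  rw [Finset.sum_comm]
  refine Finset.sum_congr rfl fun r2 _ => Finset.sum_congr rfl fun r1 _ =>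
    Finset.sum_congr rfl fun r3 _ => by ring

lemma mat3_tuck {I1 I2 I3 R1 R2 R3 : ℕ} (F : Fin R1 → Fin R2 → Fin R3 → ℝ)
    (A1 : Matrix (Fin I1) (Fin R1) ℝ) (A2 : Matrix (Fin I2) (Fin R2) ℝ)
    (A3 : Matrix (Fin I3) (Fin R3) ℝ) :
    mat3 (tuck F A1 A2 A3) = A3 * (mat3 F * (A1 ⊗ₖ A2)ᵀ) := by
  ext i p
  obtain ⟨i1, i2⟩ := p
  simp only [mat3, tuck, of_apply, Matrix.mul_apply, Fintype.sum_prod_type,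
    transpose_apply, kroneckerMap_apply, Finset.mul_sum, Finset.sum_mul]
  rw [sum3_rot]
  refine Finset.sum_congr rfl fun r3 _ => Finset.sum_congr rfl fun r1 _ =>
    Finset.sum_congr rfl fun r2 _ => by ring

lemma isUnit_of_rank_eq {n : ℕ} (B : Matrix (Fin n) (Fin n) ℝ) (h : B.rank = n) :
    IsUnit B := by
  rw [← Matrix.mulVec_surjective_iff_isUnit]
  have hrange : LinearMap.range B.mulVecLin = ⊤ := by
    apply Submodule.eq_top_of_finrank_eq
    rw [← Matrix.rank, h]
    simp
  intro v
  have := LinearMap.range_eq_top.mp hrange v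
  obtain ⟨w, hw⟩ := this
  exact ⟨w, hw⟩

lemma mode_lemma {I R : ℕ} {J : Type*} [Fintype J]
    (A At : Matrix (Fin I) (Fin R) ℝ) (X Xt : Matrix (Fin R) J ℝ)
    (hI : 0 < I)
    (hA : Aᵀ * A = (I : ℝ) • 1) (hAt : Atᵀ * At = (I : ℝ) • 1)
    (heq : A * X = At * Xt) (hrank : (A * X).rank = R) :
    ∃ H : Matrix (Fin R) (Fin R) ℝ, Hᵀ * H = 1 ∧ A = At * H ∧ Xt = H * X := by
  have hc : (I : ℝ) ≠ 0 := Nat.cast_ne_zero.mpr hI.ne'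
  have hX : X.rank = R := le_antisymm
    (by simpa using X.rank_le_card_height)
    (le_trans (le_of_eq hrank.symm) (Matrix.rank_mul_le_right A X))
  have hXXt : (X * Xᵀ).rank = R := by rw [Matrix.rank_self_mul_transpose, hX]
  have hU : IsUnit (X * Xᵀ) := isUnit_of_rank_eq _ hXXt
  set P := Xᵀ * (X * Xᵀ)⁻¹ with hP
  have hXP : X * P = 1 := by
    rw [hP, ← Matrix.mul_assoc]
    exact Matrix.mul_nonsing_inv _ ((Matrix.isUnit_iff_isUnit_det _).mp hU)
  refine ⟨Xt * P, ?_, ?_, ?_⟩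
  · have hAeq : A = At * (Xt * P) := by
      rw [← Matrix.mul_assoc, ← heq, Matrix.mul_assoc, hXP, Matrix.mul_one]
    have h2 : (I : ℝ) • ((Xt * P)ᵀ * (Xt * P)) = (I : ℝ) • (1 : Matrix (Fin R) (Fin R) ℝ) := by
      calc (I : ℝ) • ((Xt * P)ᵀ * (Xt * P))
          = (Xt * P)ᵀ * ((I : ℝ) • 1) * (Xt * P) := by
            rw [Matrix.mul_smul, Matrix.smul_mul, Matrix.mul_one]
        _ = (Xt * P)ᵀ * (Atᵀ * At) * (Xt * P) := by rw [hAt]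
        _ = (At * (Xt * P))ᵀ * (At * (Xt * P)) := by
            simp only [Matrix.transpose_mul, Matrix.mul_assoc]
        _ = Aᵀ * A := by rw [← hAeq]
        _ = (I : ℝ) • 1 := hA
    exact smul_right_injective _ hc h2
  · rw [← Matrix.mul_assoc, ← heq, Matrix.mul_assoc, hXP, Matrix.mul_one]
  · have hAeq : A = At * (Xt * P) := by
      rw [← Matrix.mul_assoc, ← heq, Matrix.mul_assoc, hXP, Matrix.mul_one]
    have h1 : Atᵀ * (A * X) = (I : ℝ) • Xt := by
      rw [heq, ← Matrix.mul_assoc, hAt, Matrix.smul_mul, Matrix.one_mul]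
    have h2 : Atᵀ * (A * X) = (I : ℝ) • (Xt * P * X) := by
      rw [hAeq]
      simp only [← Matrix.mul_assoc]
      rw [hAt]
      simp only [Matrix.smul_mul, Matrix.one_mul]
    have := h1.symm.trans h2
    exact smul_right_injective (Matrix (Fin R) J ℝ) hc this

lemma kronT_mul {l m n p q r : Type*} [Fintype l] [Fintype n]
    (B : Matrix l m ℝ) (C : Matrix n p ℝ) (D : Matrix l q ℝ) (E : Matrix n r ℝ) :
    (B ⊗ₖ C)ᵀ * (D ⊗ₖ E) = (Bᵀ * D) ⊗ₖ (Cᵀ * E) := by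
  rw [Matrix.mul_kronecker_mul, Matrix.kroneckerMap_transpose]

lemma mat1_inj {I1 I2 I3 : ℕ} {S T : Fin I1 → Fin I2 → Fin I3 → ℝ}
    (h : mat1 S = mat1 T) : S = T := by
  funext i1 i2 i3
  exact congrFun (congrFun h i1) (i2, i3)

/-- Two Tucker decompositions of the same tensor with scaled-orthonormal
loadings and full-rank cores differ by mode-wise orthogonal transformations. -/
theorem tucker_decompositions_differ_by_orthogonal {I1 I2 I3 R1 R2 R3 : ℕ}
    (S : Fin I1 → Fin I2 → Fin I3 → ℝ)
    (F Ft : Fin R1 → Fin R2 → Fin R3 → ℝ)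
    (A1 At1 : Matrix (Fin I1) (Fin R1) ℝ) (A2 At2 : Matrix (Fin I2) (Fin R2) ℝ)
    (A3 At3 : Matrix (Fin I3) (Fin R3) ℝ)
    (hdec : S = tuck F A1 A2 A3) (hdect : S = tuck Ft At1 At2 At3)
    (hA1 : A1ᵀ * A1 = (I1 : ℝ) • 1) (hA2 : A2ᵀ * A2 = (I2 : ℝ) • 1)
    (hA3 : A3ᵀ * A3 = (I3 : ℝ) • 1)
    (hAt1 : At1ᵀ * At1 = (I1 : ℝ) • 1) (hAt2 : At2ᵀ * At2 = (I2 : ℝ) • 1)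
    (hAt3 : At3ᵀ * At3 = (I3 : ℝ) • 1)
    (hS1 : (mat1 S).rank = R1) (hS2 : (mat2 S).rank = R2) (hS3 : (mat3 S).rank = R3)
    (hF1 : (mat1 F).rank = R1) (hF2 : (mat2 F).rank = R2) (hF3 : (mat3 F).rank = R3)
    (hFt1 : (mat1 Ft).rank = R1) (hFt2 : (mat2 Ft).rank = R2)
    (hFt3 : (mat3 Ft).rank = R3) :
    ∃ (H1 : Matrix (Fin R1) (Fin R1) ℝ) (H2 : Matrix (Fin R2) (Fin R2) ℝ)
      (H3 : Matrix (Fin R3) (Fin R3) ℝ),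
      H1ᵀ * H1 = 1 ∧ H2ᵀ * H2 = 1 ∧ H3ᵀ * H3 = 1 ∧
      A1 = At1 * H1 ∧ A2 = At2 * H2 ∧ A3 = At3 * H3 ∧
      F = tuck Ft H1ᵀ H2ᵀ H3ᵀ := by
  by_cases hR1z : R1 = 0
  · -- degenerate case: all ranks are zero
    have hR2z : R2 = 0 := by
      have h := (mat2 F).rank_le_card_width
      rw [hF2] at h
      simpa [hR1z] using h
    have hR3z : R3 = 0 := by
      have h := (mat3 F).rank_le_card_width
      rw [hF3] at h
      simpa [hR1z] using h
    refine ⟨1, 1, 1, by simp, by simp, by simp, ?_, ?_, ?_, ?_⟩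
    · ext i r; exact absurd r.isLt (by omega)
    · ext i r; exact absurd r.isLt (by omega)
    · ext i r; exact absurd r.isLt (by omega)
    · funext r1; exact absurd r1.isLt (by omega)
  · -- main case
    have hR2z : R2 ≠ 0 := by
      intro h
      apply hR1z
      have hh := (mat1 F).rank_le_card_width
      rw [hF1] at hh
      simpa [h] using hh
    have hR3z : R3 ≠ 0 := by
      intro h
      apply hR1z
      have hh := (mat1 F).rank_le_card_width
      rw [hF1] at hh
      simpa [h] using hh
    have hI1 : 0 < I1 := by
      have h := (mat1 S).rank_le_card_height
      rw [hS1] at h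
      simp only [Fintype.card_fin] at h
      omega
    have hI2 : 0 < I2 := by
      have h := (mat2 S).rank_le_card_height
      rw [hS2] at h
      simp only [Fintype.card_fin] at h
      omega
    have hI3 : 0 < I3 := by
      have h := (mat3 S).rank_le_card_height
      rw [hS3] at h
      simp only [Fintype.card_fin] at h
      omega
    -- mode-1
    obtain ⟨H1, hH1o, hA1e, hX1⟩ := mode_lemma A1 At1
      (mat1 F * (A2 ⊗ₖ A3)ᵀ) (mat1 Ft * (At2 ⊗ₖ At3)ᵀ) hI1 hA1 hAt1
      (by rw [← mat1_tuck, ← mat1_tuck, ← hdec, ← hdect])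
      (by rw [← mat1_tuck, ← hdec]; exact hS1)
    obtain ⟨H2, hH2o, hA2e, hX2⟩ := mode_lemma A2 At2
      (mat2 F * (A1 ⊗ₖ A3)ᵀ) (mat2 Ft * (At1 ⊗ₖ At3)ᵀ) hI2 hA2 hAt2
      (by rw [← mat2_tuck, ← mat2_tuck, ← hdec, ← hdect])
      (by rw [← mat2_tuck, ← hdec]; exact hS2)
    obtain ⟨H3, hH3o, hA3e, hX3⟩ := mode_lemma A3 At3
      (mat3 F * (A1 ⊗ₖ A2)ᵀ) (mat3 Ft * (At1 ⊗ₖ At2)ᵀ) hI3 hA3 hAt3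
      (by rw [← mat3_tuck, ← mat3_tuck, ← hdec, ← hdect])
      (by rw [← mat3_tuck, ← hdec]; exact hS3)
    refine ⟨H1, H2, H3, hH1o, hH2o, hH3o, hA1e, hA2e, hA3e, ?_⟩
    -- core relation
    have hc2 : (I2 : ℝ) ≠ 0 := Nat.cast_ne_zero.mpr hI2.ne'
    have hc3 : (I3 : ℝ) ≠ 0 := Nat.cast_ne_zero.mpr hI3.ne'
    have gramt : (At2 ⊗ₖ At3)ᵀ * (At2 ⊗ₖ At3)
        = ((I2 : ℝ) * (I3 : ℝ)) • (1 : Matrix (Fin R2 × Fin R3) (Fin R2 × Fin R3) ℝ) := by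
      rw [kronT_mul, hAt2, hAt3, Matrix.smul_kronecker, Matrix.kronecker_smul,
        Matrix.one_kronecker_one, smul_smul]
    have cross2 : A2ᵀ * At2 = (I2 : ℝ) • H2ᵀ := by
      rw [hA2e, Matrix.transpose_mul, Matrix.mul_assoc, hAt2, Matrix.mul_smul,
        Matrix.mul_one]
    have cross3 : A3ᵀ * At3 = (I3 : ℝ) • H3ᵀ := by
      rw [hA3e, Matrix.transpose_mul, Matrix.mul_assoc, hAt3, Matrix.mul_smul,
        Matrix.mul_one]
    have cross : (A2 ⊗ₖ A3)ᵀ * (At2 ⊗ₖ At3)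
        = ((I2 : ℝ) * (I3 : ℝ)) • (H2ᵀ ⊗ₖ H3ᵀ) := by
      rw [kronT_mul, cross2, cross3, Matrix.smul_kronecker, Matrix.kronecker_smul,
        smul_smul]
    have core1 : ((I2 : ℝ) * (I3 : ℝ)) • mat1 Ft
        = ((I2 : ℝ) * (I3 : ℝ)) • (H1 * (mat1 F * (H2ᵀ ⊗ₖ H3ᵀ))) := by
      have e := congrArg (fun M => M * (At2 ⊗ₖ At3)) hX1
      simp only [Matrix.mul_assoc] at e
      rw [gramt, cross] at e
      simpa [Matrix.mul_smul, Matrix.mul_one, Matrix.mul_assoc] using e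
    have core : mat1 Ft = H1 * (mat1 F * (H2ᵀ ⊗ₖ H3ᵀ)) :=
      smul_right_injective _ (mul_ne_zero hc2 hc3) core1
    apply mat1_inj
    rw [mat1_tuck, core]
    have hkT : (H2ᵀ ⊗ₖ H3ᵀ)ᵀ = H2 ⊗ₖ H3 := by
      rw [Matrix.kroneckerMap_transpose, Matrix.transpose_transpose]
    have hkid : (H2ᵀ ⊗ₖ H3ᵀ) * (H2 ⊗ₖ H3) = 1 := by
      rw [← Matrix.mul_kronecker_mul, hH2o, hH3o, Matrix.one_kronecker_one]
    rw [hkT]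
    simp only [Matrix.mul_assoc]
    rw [hkid, Matrix.mul_one, ← Matrix.mul_assoc, hH1o, Matrix.one_mul]
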